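/- The triangular prism graph (the Cartesian product K_3 □ K_2, which is the unique non-edge-transitive cubic graph on 6 vertices) admits a geodesic Leech labeling; in particular, it is a geodesic Leech graph. -/

import Mathlib

open SimpleGraph Finset

/-- A walk in `G` is a *geodesic walk* if it is a nontrivial path whose length equals
the distance in `G` between its endpoints. -/
def SimpleGraph.IsGeodesicWalk {V : Type*} (G : SimpleGraph V) {u v : V}
    (p : G.Walk u v) : Prop :=
  p.IsPath ∧ p.length = G.dist u v ∧ 0 < p.length

/-- The geodesic paths of `G`, where a path and its reverse are identified by
recording the (finite) set of edges of the path.  (A nontrivial path is determined,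
up to reversal, by its edge set.) -/
def SimpleGraph.geodesicPathSets {V : Type*} [DecidableEq V] (G : SimpleGraph V) :
    Set (Finset (Sym2 V)) :=
  {S | ∃ (u v : V) (p : G.Walk u v), G.IsGeodesicWalk p ∧ p.edges.toFinset = S}

/-- The geodesic path number `t_gp(G)`: the number of geodesic paths of `G`. -/
noncomputable def SimpleGraph.tgp {V : Type*} [DecidableEq V] (G : SimpleGraph V) : ℕ :=
  G.geodesicPathSets.ncard

/-- `f` is a geodesic Leech labeling of `G`: an edge labeling by positive integers such
that the weights of the geodesic paths of `G` are exactly `1, 2, …, t_gp(G)`,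
each occurring exactly once. -/
def SimpleGraph.IsGeodesicLeechLabeling {V : Type*} [DecidableEq V] (G : SimpleGraph V)
    (f : Sym2 V → ℕ) : Prop :=
  (∀ e ∈ G.edgeSet, 1 ≤ f e) ∧
    Set.BijOn (fun S => ∑ e ∈ S, f e) G.geodesicPathSets (Set.Icc 1 G.tgp)

set_option maxRecDepth 4000

abbrev V : Type := Fin 3 × Fin 2
abbrev Gp : SimpleGraph V := (⊤ : SimpleGraph (Fin 3)) □ (⊤ : SimpleGraph (Fin 2))

instance : DecidableRel Gp.Adj := fun x y =>
  decidable_of_iff _ (SimpleGraph.boxProd_adj (x := x) (y := y)).symm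

def lab : V → V → ℕ
  | (a, i), (b, j) =>
    if a = b then (a : ℕ) + 1
    else if i ≠ j then 0
    else (if a = 0 ∧ b = 1 ∨ a = 1 ∧ b = 0 then 4
          else if a = 0 ∧ b = 2 ∨ a = 2 ∧ b = 0 then 7 else 9) +
         (if i = 0 then 0 else 9)

def flab : Sym2 V → ℕ := Sym2.lift ⟨lab, by decide⟩

def Sset : Finset (Finset (Sym2 V)) :=
  {{s(((0:Fin 3),(0:Fin 2)), ((1:Fin 3),(0:Fin 2)))},
   {s(((0:Fin 3),(0:Fin 2)), ((2:Fin 3),(0:Fin 2)))},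
   {s(((1:Fin 3),(0:Fin 2)), ((2:Fin 3),(0:Fin 2)))},
   {s(((0:Fin 3),(1:Fin 2)), ((1:Fin 3),(1:Fin 2)))},
   {s(((0:Fin 3),(1:Fin 2)), ((2:Fin 3),(1:Fin 2)))},
   {s(((1:Fin 3),(1:Fin 2)), ((2:Fin 3),(1:Fin 2)))},
   {s(((0:Fin 3),(0:Fin 2)), ((0:Fin 3),(1:Fin 2)))},
   {s(((1:Fin 3),(0:Fin 2)), ((1:Fin 3),(1:Fin 2)))},
   {s(((2:Fin 3),(0:Fin 2)), ((2:Fin 3),(1:Fin 2)))},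
   {s(((1:Fin 3),(0:Fin 2)), ((0:Fin 3),(0:Fin 2))), s(((0:Fin 3),(0:Fin 2)), ((0:Fin 3),(1:Fin 2)))},
   {s(((0:Fin 3),(0:Fin 2)), ((1:Fin 3),(0:Fin 2))), s(((1:Fin 3),(0:Fin 2)), ((1:Fin 3),(1:Fin 2)))},
   {s(((2:Fin 3),(0:Fin 2)), ((0:Fin 3),(0:Fin 2))), s(((0:Fin 3),(0:Fin 2)), ((0:Fin 3),(1:Fin 2)))},
   {s(((0:Fin 3),(0:Fin 2)), ((2:Fin 3),(0:Fin 2))), s(((2:Fin 3),(0:Fin 2)), ((2:Fin 3),(1:Fin 2)))},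
   {s(((2:Fin 3),(0:Fin 2)), ((1:Fin 3),(0:Fin 2))), s(((1:Fin 3),(0:Fin 2)), ((1:Fin 3),(1:Fin 2)))},
   {s(((1:Fin 3),(0:Fin 2)), ((2:Fin 3),(0:Fin 2))), s(((2:Fin 3),(0:Fin 2)), ((2:Fin 3),(1:Fin 2)))},
   {s(((1:Fin 3),(1:Fin 2)), ((0:Fin 3),(1:Fin 2))), s(((0:Fin 3),(1:Fin 2)), ((0:Fin 3),(0:Fin 2)))},
   {s(((0:Fin 3),(1:Fin 2)), ((1:Fin 3),(1:Fin 2))), s(((1:Fin 3),(1:Fin 2)), ((1:Fin 3),(0:Fin 2)))},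
   {s(((2:Fin 3),(1:Fin 2)), ((0:Fin 3),(1:Fin 2))), s(((0:Fin 3),(1:Fin 2)), ((0:Fin 3),(0:Fin 2)))},
   {s(((0:Fin 3),(1:Fin 2)), ((2:Fin 3),(1:Fin 2))), s(((2:Fin 3),(1:Fin 2)), ((2:Fin 3),(0:Fin 2)))},
   {s(((2:Fin 3),(1:Fin 2)), ((1:Fin 3),(1:Fin 2))), s(((1:Fin 3),(1:Fin 2)), ((1:Fin 3),(0:Fin 2)))},
   {s(((1:Fin 3),(1:Fin 2)), ((2:Fin 3),(1:Fin 2))), s(((2:Fin 3),(1:Fin 2)), ((2:Fin 3),(0:Fin 2)))}}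

lemma dA1 : ∀ u v : V, Gp.Adj u v → ({s(u,v)} : Finset (Sym2 V)) ∈ Sset := by decide

lemma dA2 : ∀ u w v : V, Gp.Adj u w → Gp.Adj w v → ¬Gp.Adj u v → u ≠ v →
    ({s(u,w), s(w,v)} : Finset (Sym2 V)) ∈ Sset := by decide

lemma dMid : ∀ u v : V, u ≠ v → ¬Gp.Adj u v → ∃ w, Gp.Adj u w ∧ Gp.Adj w v := by decide

lemma dCard : Sset.card = 21 := by decide

lemma dSurj : Finset.Icc 1 21 ⊆ Sset.image (fun T => ∑ e ∈ T, flab e) := by decide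

lemma dPos : ∀ a b : V, Gp.Adj a b → 1 ≤ flab s(a, b) := by decide

lemma hdist2 (u v : V) (hne : u ≠ v) (hadj : ¬Gp.Adj u v) : Gp.dist u v = 2 := by
  obtain ⟨w, h1, h2⟩ := dMid u v hne hadj
  have hle := SimpleGraph.dist_le (Walk.cons h1 (Walk.cons h2 (Walk.nil (G := Gp))))
  simp only [Walk.length_cons, Walk.length_nil] at hle
  have hpos : 0 < Gp.dist u v :=
    (Walk.cons h1 (Walk.cons h2 (Walk.nil (G := Gp)))).reachable.pos_dist_of_ne hne
  have h1' : Gp.dist u v ≠ 1 := fun h => hadj (SimpleGraph.dist_eq_one_iff_adj.mp h)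
  omega

lemma mem1 {u v : V} (h : Gp.Adj u v) :
    ({s(u,v)} : Finset (Sym2 V)) ∈ Gp.geodesicPathSets := by
  refine ⟨u, v, .cons h .nil, ⟨?_, ?_, ?_⟩, ?_⟩
  · simp [Walk.isPath_def, h.ne]
  · simp [SimpleGraph.dist_eq_one_iff_adj.mpr h]
  · simp
  · simp

lemma mem2 {u w v : V} (h1 : Gp.Adj u w) (h2 : Gp.Adj w v) (hadj : ¬Gp.Adj u v)
    (hne : u ≠ v) :
    ({s(u,w), s(w,v)} : Finset (Sym2 V)) ∈ Gp.geodesicPathSets := by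
  refine ⟨u, v, .cons h1 (.cons h2 .nil), ⟨?_, ?_, ?_⟩, ?_⟩
  · simp [Walk.isPath_def, h1.ne, h2.ne, hne]
  · simp [hdist2 u v hne hadj]
  · simp
  · simp

lemma hset_eq : Gp.geodesicPathSets = ↑Sset := by
  apply Set.Subset.antisymm
  · rintro S ⟨u, v, p, ⟨hp, hlen, hpos⟩, rfl⟩
    have hne : u ≠ v := by
      rintro rfl
      rw [SimpleGraph.dist_self] at hlen; omega
    by_cases hadj : Gp.Adj u v
    · rw [SimpleGraph.dist_eq_one_iff_adj.mpr hadj] at hlen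
      cases p with
      | nil => simp at hlen
      | cons h q =>
        cases q with
        | nil =>
          simp only [Walk.edges_cons, Walk.edges_nil, List.toFinset_cons, List.toFinset_nil,
            LawfulSingleton.insert_empty_eq]
          exact Finset.mem_coe.mpr (dA1 _ _ h)
        | cons h2 q2 => simp [Walk.length_cons] at hlen
    · rw [hdist2 u v hne hadj] at hlen
      cases p with
      | nil => simp at hlen
      | cons h q =>
        cases q with
        | nil => simp at hlen
        | cons h2 q2 =>
          cases q2 with
          | nil =>
            simp only [Walk.edges_cons, Walk.edges_nil, List.toFinset_cons, List.toFinset_nil,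
              LawfulSingleton.insert_empty_eq]
            exact Finset.mem_coe.mpr (dA2 _ _ _ h h2 hadj hne)
          | cons h3 q3 => simp [Walk.length_cons] at hlen
  · intro S hS
    rw [Finset.mem_coe] at hS
    fin_cases hS
    all_goals first
      | exact mem1 (by decide)
      | exact mem2 (by decide) (by decide) (by decide) (by decide)

/-- The triangular prism graph, i.e. the Cartesian (box) product of the complete graph on
`3` vertices with the complete graph on `2` vertices, admits a geodesic Leech labeling;
in particular it is a geodesic Leech graph. -/
theorem statement_17 :
    ∃ f : Sym2 (Fin 3 × Fin 2) → ℕ,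
      ((⊤ : SimpleGraph (Fin 3)) □ (⊤ : SimpleGraph (Fin 2))).IsGeodesicLeechLabeling f := by
  refine ⟨flab, ?_, ?_⟩
  · intro e he
    induction e using Sym2.ind with
    | _ a b => exact dPos a b ((SimpleGraph.mem_edgeSet _).mp he)
  · have htgp : Gp.tgp = 21 := by
      rw [SimpleGraph.tgp, hset_eq, Set.ncard_coe_finset, dCard]
    rw [hset_eq, htgp]
    have himage : Sset.image (fun T => ∑ e ∈ T, flab e) = Finset.Icc 1 21 := by
      refine (Finset.eq_of_subset_of_card_le dSurj ?_).symm
      calc (Sset.image (fun T => ∑ e ∈ T, flab e)).card ≤ Sset.card := Finset.card_image_le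
        _ ≤ (Finset.Icc 1 21).card := by rw [dCard]; simp
    have hinj : Set.InjOn (fun T => ∑ e ∈ T, flab e) ↑Sset :=
      Finset.injOn_of_card_image_eq (by rw [himage, dCard]; simp)
    refine ⟨?_, hinj, ?_⟩
    · intro T hT
      rw [← Finset.coe_Icc, ← himage]
      exact Finset.mem_coe.mpr (Finset.mem_image_of_mem _ hT)
    · rw [Set.SurjOn, ← Finset.coe_Icc, ← himage, Finset.coe_image]
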